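/- Let S_n = ξ_1 + ... + ξ_n be a random walk whose i.i.d. steps satisfy P(ξ = j) = 1/(j(j+1)) for j ≥ 1, and let L(n) = max{k ≥ 0 : S_k ≤ n} be the last passage time below level n. Then (ln n / n) · L(n) → 1 in probability as n → ∞. -/

import Mathlib

open MeasureTheory ProbabilityTheory Filter
open scoped ENNReal Topology

noncomputable def pstep (j : ℕ) : ℝ := 1 / ((j:ℝ) * ((j:ℝ)+1))

lemma pstep_nonneg (j : ℕ) : 0 ≤ pstep j := by unfold pstep; positivity

lemma sum_pstep (m N : ℕ) (hm : 1 ≤ m) :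
    ∑ i ∈ Finset.range N, pstep (m + i) = 1/(m:ℝ) - 1/((m:ℝ)+N) := by
  induction N with
  | zero => simp
  | succ N ih =>
      rw [Finset.sum_range_succ, ih]
      have h1 : (1:ℝ) ≤ (m:ℝ) := by exact_mod_cast hm
      have h2 : (0:ℝ) < (m:ℝ) + N := by positivity
      have h3 : (0:ℝ) < (m:ℝ) + N + 1 := by positivity
      unfold pstep
      push_cast
      field_simp
      ring

lemma hasSum_pstep_tail (m : ℕ) (hm : 1 ≤ m) :
    HasSum (fun i : ℕ => pstep (m + i)) (1/(m:ℝ)) := by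
  rw [hasSum_iff_tendsto_nat_of_nonneg (fun i => pstep_nonneg _)]
  simp_rw [sum_pstep m _ hm]
  have h : Tendsto (fun N : ℕ => 1/((m:ℝ)+N)) atTop (𝓝 0) := by
    apply Tendsto.comp tendsto_inv_atTop_zero ?_ |>.congr
      (fun n => by rw [Function.comp_apply, one_div])
    exact tendsto_atTop_add_const_left _ _ tendsto_natCast_atTop_atTop
  simpa using (tendsto_const_nhds.sub h)

lemma summable_pstep : Summable pstep := by
  have := (hasSum_pstep_tail 1 le_rfl).summable
  rw [← summable_nat_add_iff 1]
  simpa [add_comm] using this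

lemma summable_pf (f : ℕ → ℝ) {C : ℝ} (hC : ∀ j, |f j| ≤ C) :
    Summable (fun j => pstep j * f j) := by
  apply Summable.of_abs
  apply Summable.of_nonneg_of_le (fun j => abs_nonneg _) (fun j => ?_)
    (summable_pstep.mul_right C)
  rw [abs_mul, abs_of_nonneg (pstep_nonneg j)]
  exact mul_le_mul_of_nonneg_left (hC j) (pstep_nonneg j)

lemma harmonic_cast (n : ℕ) : (harmonic n : ℝ) = ∑ i ∈ Finset.range n, 1/((i:ℝ)+1) := by
  unfold harmonic; push_cast; simp [one_div]

lemma summable_min (n : ℕ) : Summable (fun j => pstep j * ((min j n : ℕ):ℝ)) :=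
  summable_pf _ (C := n) (fun j => by
    show |((min j n : ℕ):ℝ)| ≤ (n:ℝ)
    rw [abs_of_nonneg (Nat.cast_nonneg _)]; exact_mod_cast Nat.min_le_right j n)

lemma tsum_min (n : ℕ) (hn : 1 ≤ n) :
    ∑' j, pstep j * ((min j n : ℕ):ℝ) = (harmonic n : ℝ) := by
  rw [← Summable.sum_add_tsum_nat_add (n+1) (summable_min n)]
  have hhead : ∑ i ∈ Finset.range (n+1), pstep i * ((min i n : ℕ):ℝ)
      = (harmonic (n+1) : ℝ) - 1 := by
    have hterm : ∀ i ∈ Finset.range (n+1),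
        pstep i * ((min i n : ℕ):ℝ) = 1/((i:ℝ)+1) - (if i = 0 then 1 else 0) := by
      intro i hi
      rw [Finset.mem_range] at hi
      rw [min_eq_left (by omega)]
      rcases Nat.eq_zero_or_pos i with h | h
      · subst h; simp [pstep]
      · rw [if_neg (by omega)]
        have h1 : (0:ℝ) < i := by exact_mod_cast h
        unfold pstep
        field_simp
        ring
    rw [Finset.sum_congr rfl hterm, Finset.sum_sub_distrib, harmonic_cast,
      Finset.sum_ite_eq' (Finset.range (n+1)) 0 (fun _ => (1:ℝ))]
    simp
  have htail : ∑' i, pstep (i + (n+1)) * ((min (i + (n+1)) n : ℕ):ℝ)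
      = (n:ℝ) * (1/((n:ℝ)+1)) := by
    have h : ∀ i : ℕ, pstep (i + (n+1)) * ((min (i + (n+1)) n : ℕ):ℝ)
        = pstep ((n+1) + i) * (n:ℝ) := by
      intro i
      rw [min_eq_right (by omega), add_comm i (n+1)]
    simp_rw [h]
    rw [((hasSum_pstep_tail (n+1) (by omega)).mul_right (n:ℝ)).tsum_eq]
    push_cast
    ring
  rw [hhead, htail, harmonic_succ]
  push_cast
  have : ((n:ℝ)+1) ≠ 0 := by positivity
  field_simp
  ring

lemma tsum_min_sq_le (n : ℕ) (hn : 1 ≤ n) :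
    ∑' j, pstep j * ((min j n : ℕ):ℝ)^2 ≤ 3*(n:ℝ) := by
  have hs : Summable (fun j => pstep j * ((min j n : ℕ):ℝ)^2) :=
    summable_pf _ (C := (n:ℝ)^2) (fun j => by
      show |((min j n : ℕ):ℝ)^2| ≤ (n:ℝ)^2
      rw [abs_of_nonneg (by positivity)]
      have h : ((min j n : ℕ):ℝ) ≤ n := by exact_mod_cast Nat.min_le_right j n
      have h0 : (0:ℝ) ≤ ((min j n : ℕ):ℝ) := Nat.cast_nonneg _
      nlinarith)
  rw [← Summable.sum_add_tsum_nat_add (n+1) hs]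
  have hhead : ∑ i ∈ Finset.range (n+1), pstep i * ((min i n : ℕ):ℝ)^2 ≤ (n:ℝ)+1 := by
    have h : ∀ i ∈ Finset.range (n+1), pstep i * ((min i n : ℕ):ℝ)^2 ≤ 1 := by
      intro i hi
      rw [Finset.mem_range] at hi
      rw [min_eq_left (by omega)]
      rcases Nat.eq_zero_or_pos i with h | h
      · subst h; simp [pstep]
      · have h1 : (0:ℝ) < i := by exact_mod_cast h
        unfold pstep
        rw [div_mul_eq_mul_div, one_mul, div_le_one (by positivity)]
        nlinarith
    calc _ ≤ ∑ _i ∈ Finset.range (n+1), (1:ℝ) := Finset.sum_le_sum h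
      _ = (n:ℝ)+1 := by simp
  have htail : ∑' i, pstep (i + (n+1)) * ((min (i + (n+1)) n : ℕ):ℝ)^2
      = (n:ℝ)^2 * (1/((n:ℝ)+1)) := by
    have h : ∀ i : ℕ, pstep (i + (n+1)) * ((min (i + (n+1)) n : ℕ):ℝ)^2
        = pstep ((n+1) + i) * (n:ℝ)^2 := by
      intro i
      rw [min_eq_right (by omega), add_comm i (n+1)]
    simp_rw [h]
    rw [((hasSum_pstep_tail (n+1) (by omega)).mul_right ((n:ℝ)^2)).tsum_eq]
    push_cast
    ring
  rw [htail]
  have h1 : (1:ℝ) ≤ n := by exact_mod_cast hn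
  have h2 : (n:ℝ)^2 * (1/((n:ℝ)+1)) ≤ n := by
    rw [mul_one_div, div_le_iff₀ (by positivity)]
    nlinarith
  linarith

lemma L_char {Ω : Type*} (ξ : ℕ → Ω → ℕ) (S : ℕ → Ω → ℕ)
    (hS : ∀ k ω, S k ω = ∑ i ∈ Finset.range k, ξ i ω) (ω : Ω)
    (hA : ∀ i, 1 ≤ ξ i ω) (n k : ℕ) :
    k ≤ sSup {k | S k ω ≤ n} ↔ S k ω ≤ n := by
  have hge : ∀ m, m ≤ S m ω := by
    intro m
    rw [hS]
    calc m = ∑ _i ∈ Finset.range m, 1 := by simp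
      _ ≤ _ := Finset.sum_le_sum (fun i _ => hA i)
  have hmono : ∀ a b, a ≤ b → S a ω ≤ S b ω := by
    intro a b hab
    rw [hS, hS]
    exact Finset.sum_le_sum_of_subset (Finset.range_subset_range.mpr hab)
  have hbdd : BddAbove {k | S k ω ≤ n} := ⟨n, fun x hx => (hge x).trans hx⟩
  have hne : Set.Nonempty {k | S k ω ≤ n} := ⟨0, by simp [Set.mem_setOf_eq, hS]⟩
  constructor
  · intro hk
    have hsup := Nat.sSup_mem hne hbdd
    exact (hmono _ _ hk).trans hsup
  · intro hk
    exact le_csSup hbdd hk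

section Law

variable {Ω : Type*} [MeasurableSpace Ω] {μ : Measure Ω} [IsProbabilityMeasure μ]
  {X : Ω → ℕ} (hX : Measurable X)
  (hlaw : ∀ j : ℕ, 1 ≤ j → μ {ω | X ω = j} = ENNReal.ofReal (pstep j))

include hX hlaw in
omit [IsProbabilityMeasure μ] in
lemma law_tail (n : ℕ) : μ {ω | n < X ω} = ENNReal.ofReal (1/((n:ℝ)+1)) := by
  have hset : {ω | n < X ω} = ⋃ i : ℕ, {ω | X ω = n + 1 + i} := by
    ext ω; simp only [Set.mem_setOf_eq, Set.mem_iUnion]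
    constructor
    · intro h; exact ⟨X ω - (n+1), by omega⟩
    · rintro ⟨i, hi⟩; omega
  rw [hset, measure_iUnion]
  · have h : ∀ i : ℕ, μ {ω | X ω = n + 1 + i} = ENNReal.ofReal (pstep (n+1+i)) :=
      fun i => hlaw _ (by omega)
    simp_rw [h]
    rw [← ENNReal.ofReal_tsum_of_nonneg (fun i => pstep_nonneg _)
        (hasSum_pstep_tail (n+1) (by omega)).summable]
    rw [(hasSum_pstep_tail (n+1) (by omega)).tsum_eq]
    norm_num
  · intro i j hij
    simp only [Function.onFun, Set.disjoint_left, Set.mem_setOf_eq]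
    intro ω h1 h2; omega
  · exact fun i => hX (measurableSet_singleton _)

include hX hlaw in
lemma law_zero : μ {ω | X ω = 0} = 0 := by
  have h1 : {ω | X ω = 0} = {ω | 0 < X ω}ᶜ := by ext ω; simp [Set.mem_setOf_eq]
  have h2 := law_tail hX hlaw 0
  have hms : MeasurableSet {ω | 0 < X ω} := hX (measurableSet_lt measurable_const measurable_id)
  rw [h1, measure_compl hms (measure_ne_top _ _), h2]
  norm_num

include hX hlaw in
lemma integral_comp (hzero : μ {ω | X ω = 0} = 0) (f : ℕ → ℝ) {C : ℝ} (hC : ∀ j, |f j| ≤ C) :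
    ∫ ω, f (X ω) ∂μ = ∑' j, pstep j * f j := by
  have hfm : Measurable f := measurable_from_top
  have hint : Integrable f (μ.map X) := by
    refine Integrable.mono' (integrable_const C) hfm.aestronglyMeasurable ?_
    filter_upwards with a using hC a
  rw [← integral_map hX.aemeasurable hfm.aestronglyMeasurable.aemeasurable.aestronglyMeasurable]
  rw [integral_countable' hint]
  congr 1; ext j
  rcases Nat.eq_zero_or_pos j with h | h
  · subst h
    rw [measureReal_def, Measure.map_apply hX (measurableSet_singleton _)]
    have h0 : X ⁻¹' {0} = {ω | X ω = 0} := rfl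
    rw [h0, hzero]
    simp [pstep]
  · rw [measureReal_def, Measure.map_apply hX (measurableSet_singleton _)]
    have h0 : X ⁻¹' {j} = {ω | X ω = j} := rfl
    rw [h0, hlaw j h, ENNReal.toReal_ofReal (pstep_nonneg j)]
    rw [smul_eq_mul]

end Law

section Prob

variable {Ω : Type*} [MeasurableSpace Ω] {μ : Measure Ω} [IsProbabilityMeasure μ]
  {ξ : ℕ → Ω → ℕ} (hmeas : ∀ i, Measurable (ξ i))
  (hindep : iIndepFun ξ μ)
  (hlaw : ∀ i, ∀ j : ℕ, 1 ≤ j → μ {ω | ξ i ω = j} = ENNReal.ofReal (pstep j))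
  (hzero : ∀ i, μ {ω | ξ i ω = 0} = 0)

include hmeas in
lemma trunc_mem2 (n i : ℕ) : MemLp (fun ω => ((min (ξ i ω) n : ℕ):ℝ)) 2 μ := by
  refine MemLp.mono_exponent (q := ⊤) ?_ le_top
  have hm : Measurable (fun ω => ((min (ξ i ω) n : ℕ):ℝ)) :=
    (measurable_from_top (f := fun j : ℕ => ((min j n : ℕ):ℝ))).comp (hmeas i)
  apply memLp_top_of_bound hm.aestronglyMeasurable (n:ℝ)
  filter_upwards with ω
  rw [Real.norm_eq_abs, abs_of_nonneg (Nat.cast_nonneg _)]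
  exact_mod_cast Nat.min_le_right _ n

include hmeas hlaw hzero in
lemma integral_trunc (n i : ℕ) (hn : 1 ≤ n) :
    ∫ ω, ((min (ξ i ω) n : ℕ):ℝ) ∂μ = (harmonic n : ℝ) := by
  rw [integral_comp (hmeas i) (hlaw i) (hzero i) (fun j => ((min j n : ℕ):ℝ)) (C := n)
    (fun j => by
      show |((min j n : ℕ):ℝ)| ≤ (n:ℝ)
      rw [abs_of_nonneg (Nat.cast_nonneg _)]; exact_mod_cast Nat.min_le_right j n)]
  exact tsum_min n hn

include hmeas hlaw hzero in
lemma variance_trunc (n i : ℕ) (hn : 1 ≤ n) :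
    variance (fun ω => ((min (ξ i ω) n : ℕ):ℝ)) μ ≤ 3*(n:ℝ) := by
  rw [variance_eq_sub (trunc_mem2 hmeas n i)]
  have h2 : ∫ ω, (fun ω => ((min (ξ i ω) n : ℕ):ℝ)) ω ^ 2 ∂μ ≤ 3*(n:ℝ) := by
    have h := integral_comp (hmeas i) (hlaw i) (hzero i) (fun j => ((min j n : ℕ):ℝ)^2)
      (C := (n:ℝ)^2) (fun j => by
        show |((min j n : ℕ):ℝ)^2| ≤ (n:ℝ)^2
        rw [abs_of_nonneg (by positivity)]
        have h : ((min j n : ℕ):ℝ) ≤ n := by exact_mod_cast Nat.min_le_right j n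
        have h0 : (0:ℝ) ≤ ((min j n : ℕ):ℝ) := Nat.cast_nonneg _
        nlinarith)
    calc ∫ ω, (fun ω => ((min (ξ i ω) n : ℕ):ℝ)) ω ^ 2 ∂μ
        = ∑' j, pstep j * ((min j n : ℕ):ℝ)^2 := h
      _ ≤ 3*(n:ℝ) := tsum_min_sq_le n hn
  calc _ ≤ μ[(fun ω => ((min (ξ i ω) n : ℕ):ℝ)) ^ 2] := by
        have := sq_nonneg (μ[fun ω => ((min (ξ i ω) n : ℕ):ℝ)])
        linarith
    _ ≤ 3*(n:ℝ) := by simpa [Pi.pow_apply] using h2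

include hmeas hindep in
lemma variance_W (n k : ℕ) :
    variance (fun ω => ∑ i ∈ Finset.range k, ((min (ξ i ω) n : ℕ):ℝ)) μ
      = ∑ i ∈ Finset.range k, variance (fun ω => ((min (ξ i ω) n : ℕ):ℝ)) μ := by
  have h := IndepFun.variance_sum (μ := μ)
    (X := fun i ω => ((min (ξ i ω) n : ℕ):ℝ)) (s := Finset.range k)
    (fun i _ => trunc_mem2 hmeas n i)
    (fun ⦃i⦄ _ ⦃j⦄ _ hij => (hindep.indepFun hij).comp
      (measurable_from_top (f := fun j : ℕ => ((min j n : ℕ):ℝ)))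
      (measurable_from_top (f := fun j : ℕ => ((min j n : ℕ):ℝ))))
  rw [← h]
  congr 1
  ext ω
  simp [Finset.sum_apply]

include hmeas hindep hlaw hzero in
lemma cheb (n k : ℕ) (hn : 1 ≤ n) {c : ℝ} (hc : 0 < c) :
    μ {ω | c ≤ |(∑ i ∈ Finset.range k, ((min (ξ i ω) n : ℕ):ℝ)) - k * (harmonic n : ℝ)|}
      ≤ ENNReal.ofReal (3*k*n/c^2) := by
  set W := fun ω => ∑ i ∈ Finset.range k, ((min (ξ i ω) n : ℕ):ℝ) with hW
  have hmem : MemLp W 2 μ := by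
    have h := memLp_finsetSum' (μ := μ) (Finset.range k)
      (f := fun i ω => ((min (ξ i ω) n : ℕ):ℝ)) (fun i _ => trunc_mem2 hmeas n i)
    convert h using 1
    ext ω; simp [hW, Finset.sum_apply]
  have hEW : μ[W] = k * (harmonic n : ℝ) := by
    rw [hW, integral_finset_sum _ (fun i _ => (trunc_mem2 hmeas n i).integrable one_le_two)]
    simp_rw [integral_trunc hmeas hlaw hzero n _ hn]
    simp [mul_comm]
  have hvar : variance W μ ≤ 3*k*n := by
    rw [hW, variance_W hmeas hindep n k]
    calc _ ≤ ∑ _i ∈ Finset.range k, 3*(n:ℝ) :=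
          Finset.sum_le_sum (fun i _ => variance_trunc hmeas hlaw hzero n i hn)
      _ = 3*k*n := by simp; ring
  calc μ {ω | c ≤ |W ω - k * (harmonic n : ℝ)|}
      = μ {ω | c ≤ |W ω - μ[W]|} := by rw [hEW]
    _ ≤ ENNReal.ofReal (variance W μ / c^2) := meas_ge_le_variance_div_sq hmem hc
    _ ≤ ENNReal.ofReal (3*k*n/c^2) := by
        apply ENNReal.ofReal_le_ofReal
        exact div_le_div_of_nonneg_right hvar (by positivity) |>.trans_eq rfl

end Prob

set_option maxHeartbeats 1000000 in
/-- **Last passage time asymptotics.** Let `S_k = ξ_1 + ... + ξ_k` be a random walk whose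
i.i.d. steps satisfy `P(ξ = j) = 1/(j(j+1))` for `j ≥ 1`, and let
`L(n) = max{k ≥ 0 : S_k ≤ n}`. Then `(ln n / n) · L(n) → 1` in probability as `n → ∞`. -/
theorem lastPassage_ln_n_over_n_tendsto_one
    {Ω : Type*} [MeasurableSpace Ω] (μ : Measure Ω) [IsProbabilityMeasure μ]
    (ξ : ℕ → Ω → ℕ) (hmeas : ∀ i, Measurable (ξ i))
    (hindep : iIndepFun ξ μ)
    (hlaw : ∀ i, ∀ j : ℕ, 1 ≤ j →
      μ {ω | ξ i ω = j} = ENNReal.ofReal (1 / ((j : ℝ) * ((j : ℝ) + 1))))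
    (S : ℕ → Ω → ℕ) (hS : ∀ k ω, S k ω = ∑ i ∈ Finset.range k, ξ i ω)
    (L : ℕ → Ω → ℕ) (hL : ∀ n ω, L n ω = sSup {k : ℕ | S k ω ≤ n}) :
    ∀ ε : ℝ, 0 < ε →
      Tendsto (fun n : ℕ => μ {ω | |Real.log n / n * (L n ω : ℝ) - 1| > ε})
        atTop (𝓝 0) := by
  suffices H : ∀ ε : ℝ, 0 < ε → ε ≤ 1/2 →
      Tendsto (fun n : ℕ => μ {ω | |Real.log n / n * (L n ω : ℝ) - 1| > ε}) atTop (𝓝 0) by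
    intro ε hε
    have hδ : 0 < min ε (1/2) := lt_min hε (by norm_num)
    have hmain := H _ hδ (min_le_right _ _)
    refine tendsto_of_tendsto_of_tendsto_of_le_of_le' tendsto_const_nhds hmain
      (Eventually.of_forall fun n => zero_le) (Eventually.of_forall fun n => ?_)
    apply measure_mono
    intro ω hω
    simp only [Set.mem_setOf_eq] at hω ⊢
    exact lt_of_le_of_lt (min_le_left _ _) hω
  intro ε hε hε2
  have hlaw' : ∀ i, ∀ j : ℕ, 1 ≤ j → μ {ω | ξ i ω = j} = ENNReal.ofReal (pstep j) := by
    intro i j hj; rw [pstep]; exact hlaw i j hj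
  have hzero : ∀ i, μ {ω | ξ i ω = 0} = 0 := fun i => law_zero (hmeas i) (hlaw' i)
  set A : Set Ω := {ω | ∀ i, 1 ≤ ξ i ω} with hA
  have hAc : μ Aᶜ = 0 := by
    have hsub : Aᶜ ⊆ ⋃ i, {ω | ξ i ω = 0} := by
      intro ω hω
      simp only [hA, Set.mem_compl_iff, Set.mem_setOf_eq, not_forall] at hω
      obtain ⟨i, hi⟩ := hω
      exact Set.mem_iUnion.mpr ⟨i, show ξ i ω = 0 by omega⟩
    exact measure_mono_null hsub (measure_iUnion_null (fun i => hzero i))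
  set C : ℝ := 33/ε^2 + 2 with hCdef
  have hlogtend : Tendsto (fun n : ℕ => Real.log n) atTop atTop :=
    Real.tendsto_log_atTop.comp tendsto_natCast_atTop_atTop
  have hBtend : Tendsto (fun n : ℕ => ENNReal.ofReal (C / Real.log n)) atTop (𝓝 0) := by
    rw [← ENNReal.ofReal_zero]
    apply ENNReal.tendsto_ofReal
    exact Tendsto.div_atTop tendsto_const_nhds hlogtend
  refine tendsto_of_tendsto_of_tendsto_of_le_of_le' tendsto_const_nhds hBtend
    (Eventually.of_forall fun n => zero_le) ?_
  have hev3 : ∀ᶠ n : ℕ in atTop, Real.log n ≤ ε/6 * n := by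
    have h := Real.isLittleO_log_id_atTop.def (show (0:ℝ) < ε/6 by positivity)
    have h2 := (tendsto_natCast_atTop_atTop (R := ℝ)).eventually h
    filter_upwards [h2, eventually_ge_atTop 1] with n hn hn1
    have h1 : (1:ℝ) ≤ n := by exact_mod_cast hn1
    calc Real.log n ≤ ‖Real.log n‖ := le_abs_self _
      _ ≤ ε/6 * ‖(n:ℝ)‖ := hn
      _ = ε/6 * n := by rw [Real.norm_eq_abs, abs_of_nonneg (by linarith)]
  have hev4 : ∀ᶠ n : ℕ in atTop, 1 ≤ ε/6 * (n:ℝ) := by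
    have h : Tendsto (fun n : ℕ => ε/6 * (n:ℝ)) atTop atTop :=
      Tendsto.const_mul_atTop (by positivity) tendsto_natCast_atTop_atTop
    exact h.eventually_ge_atTop 1
  filter_upwards [eventually_ge_atTop 2, hlogtend.eventually_ge_atTop 1,
    hlogtend.eventually_ge_atTop (6/ε), hev3, hev4] with n hn2 hR1 hR6 hRn h1n
  -- now fixed n
  set R := Real.log n with hRdef
  have hR0 : (0:ℝ) < R := by linarith
  have hn0 : (0:ℝ) < n := by exact_mod_cast (by omega : 0 < n)
  have hn1 : 1 ≤ n := by omega
  have hRlen : R ≤ (n:ℝ) := by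
    have := Real.log_le_sub_one_of_pos hn0
    linarith
  set cP : ℝ := (1+ε)*n/R with hcp
  set cM : ℝ := (1-ε)*n/R with hcm
  have hcM0 : 0 ≤ cM := by
    apply div_nonneg _ hR0.le
    nlinarith
  have hcP0 : 0 ≤ cP := by
    apply div_nonneg _ hR0.le
    nlinarith
  set kp := Nat.floor cP + 1 with hkpdef
  set km := Nat.ceil cM with hkmdef
  have hkp_gt : cP < kp := by
    rw [hkpdef]; push_cast; exact Nat.lt_floor_add_one cP
  have hkp_le : (kp:ℝ) ≤ cP + 1 := by
    rw [hkpdef]; push_cast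
    have := Nat.floor_le hcP0
    linarith
  have hkm_ge : cM ≤ km := Nat.le_ceil _
  have hkm_le : (km:ℝ) ≤ cM + 1 := (Nat.ceil_lt_add_one hcM0).le
  have hHn_lb : R ≤ (harmonic n : ℝ) := by
    have h1 := log_add_one_le_harmonic n
    have h2 : Real.log n ≤ Real.log (↑n+1) :=
      Real.log_le_log hn0 (by linarith)
    push_cast at h1
    linarith
  have hHn_ub : (harmonic n : ℝ) ≤ 1 + R := harmonic_le_one_add_log n
  have hHn0 : (0:ℝ) ≤ (harmonic n : ℝ) := le_trans hR0.le hHn_lb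
  have hcpR : cP * R = (1+ε)*n := by
    rw [hcp, div_mul_cancel₀ _ hR0.ne']
  have hcmR : cM * R = (1-ε)*n := by
    rw [hcm, div_mul_cancel₀ _ hR0.ne']
  have hmargin1 : ε*n ≤ (kp:ℝ)*(harmonic n : ℝ) - n := by
    have h2 : cP * R ≤ (kp:ℝ) * (harmonic n : ℝ) :=
      mul_le_mul hkp_gt.le hHn_lb hR0.le (Nat.cast_nonneg _)
    rw [hcpR] at h2
    linarith
  have hdivle : (n:ℝ)/R ≤ ε/6*n := by
    rw [div_le_iff₀ hR0]
    have hh : ε/6*n*(6/ε) = n := by field_simp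
    nlinarith [mul_le_mul_of_nonneg_left hR6 (by positivity : (0:ℝ) ≤ ε/6*n)]
  have hmargin2 : ε/2*n ≤ (n:ℝ) - (km:ℝ)*(harmonic n : ℝ) := by
    have h1 : (km:ℝ)*(harmonic n : ℝ) ≤ (cM+1)*(1+R) :=
      mul_le_mul hkm_le hHn_ub hHn0 (by linarith)
    have h2 : (cM+1)*(1+R) = cM*R + (cM + 1 + R) := by ring
    have ha : cM ≤ (n:ℝ)/R := by
      rw [hcm]
      gcongr
      nlinarith
    have h3 : cM + 1 + R ≤ ε/2 * n := by
      have := hdivle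
      linarith [ha, h1n, hRn]
    rw [hcmR] at h2
    nlinarith [h1, h2, h3, hn0]
  have hkpb : (kp:ℝ)*R ≤ 3*n := by
    have h1 : cP ≤ (3/2)*n/R := by
      rw [hcp]
      gcongr
      nlinarith
    have h2 : ((3/2)*(n:ℝ)/R)*R = (3/2)*n := by field_simp
    have h3 : (kp:ℝ)*R ≤ (cP+1)*R := mul_le_mul_of_nonneg_right hkp_le hR0.le
    nlinarith
  have hkmb : (km:ℝ)*R ≤ 2*n := by
    have ha : cM ≤ (n:ℝ)/R := by
      rw [hcm]
      gcongr
      nlinarith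
    have h2 : ((n:ℝ)/R)*R = (n:ℝ) := by field_simp
    have h3 : (km:ℝ)*R ≤ (cM+1)*R := mul_le_mul_of_nonneg_right hkm_le hR0.le
    nlinarith
  -- event inclusion
  set E1 : Set Ω := {ω | ε*(n:ℝ) ≤
    |(∑ i ∈ Finset.range kp, ((min (ξ i ω) n : ℕ):ℝ)) - kp * (harmonic n : ℝ)|} with hE1
  set E2 : Set Ω := ⋃ i ∈ Finset.range km, {ω | n < ξ i ω} with hE2
  set E3 : Set Ω := {ω | ε/2*(n:ℝ) ≤
    |(∑ i ∈ Finset.range km, ((min (ξ i ω) n : ℕ):ℝ)) - km * (harmonic n : ℝ)|} with hE3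
  have hincl : {ω | |Real.log n / n * (L n ω : ℝ) - 1| > ε} ⊆
      (E1 ∪ (E2 ∪ E3)) ∪ Aᶜ := by
    intro ω hω
    by_cases hωA : ω ∈ A
    swap
    · exact Or.inr hωA
    left
    simp only [Set.mem_setOf_eq] at hω
    have hAω : ∀ i, 1 ≤ ξ i ω := hωA
    have hchar : ∀ k, k ≤ L n ω ↔ S k ω ≤ n := by
      intro k
      rw [hL n ω]
      exact L_char ξ S hS ω hAω n k
    rw [← hRdef] at hω
    rcases lt_abs.mp hω with hc1 | hc2
    · -- L too big
      left
      have hu : R / n * (L n ω : ℝ) = R * (L n ω : ℝ) / n := by ring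
      rw [hu] at hc1
      have h1 : (1+ε) * n < R * (L n ω : ℝ) := by
        have := (lt_div_iff₀ hn0).mp (by linarith : 1 + ε < R * (L n ω:ℝ) / n)
        linarith
      have hub : cP < (L n ω : ℝ) := by
        rw [hcp, div_lt_iff₀ hR0]
        nlinarith
      have hkpL : kp ≤ L n ω := by
        have hfl : Nat.floor cP < L n ω := by
          rw [Nat.floor_lt hcP0]
          exact hub
        omega
      have hSkp : S kp ω ≤ n := (hchar kp).mp hkpL
      have hWn : (∑ i ∈ Finset.range kp, ((min (ξ i ω) n : ℕ):ℝ)) ≤ n := by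
        calc (∑ i ∈ Finset.range kp, ((min (ξ i ω) n : ℕ):ℝ))
            ≤ ∑ i ∈ Finset.range kp, ((ξ i ω : ℕ):ℝ) :=
              Finset.sum_le_sum (fun i _ => by exact_mod_cast Nat.min_le_left _ _)
          _ = ((S kp ω : ℕ):ℝ) := by rw [hS]; push_cast; ring
          _ ≤ n := by exact_mod_cast hSkp
      show ω ∈ E1
      rw [hE1, Set.mem_setOf_eq, abs_sub_comm]
      calc ε*(n:ℝ) ≤ kp*(harmonic n : ℝ) - n := hmargin1
        _ ≤ kp*(harmonic n : ℝ) - (∑ i ∈ Finset.range kp, ((min (ξ i ω) n : ℕ):ℝ)) := by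
            linarith
        _ ≤ |kp*(harmonic n : ℝ) - (∑ i ∈ Finset.range kp, ((min (ξ i ω) n : ℕ):ℝ))| :=
            le_abs_self _
    · -- L too small
      right
      have hu : R / n * (L n ω : ℝ) = R * (L n ω : ℝ) / n := by ring
      rw [hu] at hc2
      have h1 : R * (L n ω : ℝ) < (1-ε) * n := by
        have h2 : R * (L n ω:ℝ) / n < 1 - ε := by linarith
        have := (div_lt_iff₀ hn0).mp h2
        linarith
      have hlb : (L n ω : ℝ) < cM := by
        rw [hcm, lt_div_iff₀ hR0]
        nlinarith
      have hLkm : L n ω < km := by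
        have h2 : (L n ω : ℝ) < (km:ℝ) := lt_of_lt_of_le hlb hkm_ge
        exact_mod_cast h2
      have hSkm : n < S km ω := by
        by_contra h
        push_neg at h
        have := (hchar km).mpr h
        omega
      by_cases hbig : ∃ i ∈ Finset.range km, n < ξ i ω
      · left
        obtain ⟨i, hi, hni⟩ := hbig
        rw [hE2]
        exact Set.mem_biUnion hi hni
      · right
        push_neg at hbig
        have hWeq : (∑ i ∈ Finset.range km, ((min (ξ i ω) n : ℕ):ℝ)) = ((S km ω : ℕ):ℝ) := by
          have h4 : ∀ i ∈ Finset.range km, ((min (ξ i ω) n : ℕ):ℝ) = ((ξ i ω : ℕ):ℝ) :=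
            fun i hi => by rw [min_eq_left (hbig i hi)]
          rw [Finset.sum_congr rfl h4, hS]
          push_cast
          ring
        show ω ∈ E3
        rw [hE3, Set.mem_setOf_eq]
        have hWgt : (n:ℝ) < (∑ i ∈ Finset.range km, ((min (ξ i ω) n : ℕ):ℝ)) := by
          rw [hWeq]; exact_mod_cast hSkm
        calc ε/2*(n:ℝ) ≤ n - km*(harmonic n : ℝ) := hmargin2
          _ ≤ (∑ i ∈ Finset.range km, ((min (ξ i ω) n : ℕ):ℝ)) - km*(harmonic n : ℝ) := by
              linarith
          _ ≤ |_| := le_abs_self _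
  -- measure bounds
  have hμE1 : μ E1 ≤ ENNReal.ofReal (9/(ε^2*R)) := by
    refine le_trans (cheb hmeas hindep hlaw' hzero n kp hn1 (by positivity)) ?_
    apply ENNReal.ofReal_le_ofReal
    rw [div_le_div_iff₀ (by positivity) (by positivity)]
    have : (ε*(n:ℝ))^2 = ε^2*n^2 := by ring
    nlinarith [mul_le_mul_of_nonneg_left hkpb (by positivity : (0:ℝ) ≤ 3*ε^2*n)]
  have hμE3 : μ E3 ≤ ENNReal.ofReal (24/(ε^2*R)) := by
    refine le_trans (cheb hmeas hindep hlaw' hzero n km hn1 (by positivity)) ?_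
    apply ENNReal.ofReal_le_ofReal
    rw [div_le_div_iff₀ (by positivity) (by positivity)]
    nlinarith [mul_le_mul_of_nonneg_left hkmb (by positivity : (0:ℝ) ≤ 3*ε^2*n)]
  have hμE2 : μ E2 ≤ ENNReal.ofReal (2/R) := by
    calc μ E2 ≤ ∑ i ∈ Finset.range km, μ {ω | n < ξ i ω} := measure_biUnion_finset_le _ _
      _ = ∑ _i ∈ Finset.range km, ENNReal.ofReal (1/((n:ℝ)+1)) :=
          Finset.sum_congr rfl (fun i _ => law_tail (hmeas i) (hlaw' i) n)
      _ = (km:ℝ≥0∞) * ENNReal.ofReal (1/((n:ℝ)+1)) := by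
          rw [Finset.sum_const, Finset.card_range, nsmul_eq_mul]
      _ = ENNReal.ofReal ((km:ℝ) * (1/((n:ℝ)+1))) := by
          rw [ENNReal.ofReal_mul (Nat.cast_nonneg km), ENNReal.ofReal_natCast]
      _ ≤ ENNReal.ofReal (2/R) := by
          apply ENNReal.ofReal_le_ofReal
          rw [mul_one_div, div_le_div_iff₀ (by positivity) hR0]
          nlinarith
  calc μ {ω | |Real.log n / n * (L n ω : ℝ) - 1| > ε}
      ≤ μ ((E1 ∪ (E2 ∪ E3)) ∪ Aᶜ) := measure_mono hincl
    _ ≤ μ (E1 ∪ (E2 ∪ E3)) + μ Aᶜ := measure_union_le _ _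
    _ = μ (E1 ∪ (E2 ∪ E3)) := by rw [hAc, add_zero]
    _ ≤ μ E1 + (μ E2 + μ E3) :=
        le_trans (measure_union_le _ _) (by gcongr; exact measure_union_le _ _)
    _ ≤ ENNReal.ofReal (9/(ε^2*R)) + (ENNReal.ofReal (2/R) + ENNReal.ofReal (24/(ε^2*R))) := by
        gcongr
    _ ≤ ENNReal.ofReal (C / R) := by
        rw [← ENNReal.ofReal_add (by positivity) (by positivity),
          ← ENNReal.ofReal_add (by positivity) (by positivity)]
        apply ENNReal.ofReal_le_ofReal
        rw [hCdef]
        have hh : 9/(ε^2*R) + (2/R + 24/(ε^2*R)) = (33/ε^2+2)/R := by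
          field_simp
          ring
        rw [hh]
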